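/- Let G be a finite geodetic graph that is fully cycle extendable, i.e. every vertex of G lies on a cycle of length 3 and every non-Hamiltonian cycle of G is extendable. Then G is a complete graph. -/

import Mathlib

open SimpleGraph

section helpers

variable {V : Type*} [DecidableEq V] {G : SimpleGraph V}

private lemma mem_support_iff_mem_tail {v y : V} (c : G.Walk v v) (hn : ¬c.Nil) :
    y ∈ c.support ↔ y ∈ c.support.tail := by
  obtain ⟨a, h, p, rfl⟩ := Walk.not_nil_iff.mp hn
  simp only [Walk.support_cons, List.tail_cons, List.mem_cons]
  constructor
  · rintro (rfl | h)
    · exact p.end_mem_support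
    · exact h
  · exact Or.inr

private lemma mem_support_rotate_iff {v u y : V} {c : G.Walk v v}
    (hc : c.IsCycle) (hu : u ∈ c.support) :
    y ∈ (c.rotate u hu).support ↔ y ∈ c.support := by
  rw [mem_support_iff_mem_tail _ (hc.rotate hu).not_nil,
    mem_support_iff_mem_tail _ hc.not_nil]
  exact (Walk.support_rotate c u hu).perm.mem_iff

/-- In a cycle based at `x`, the vertex `x` has two distinct neighbors on the cycle. -/
private lemma cycle_two_neighbors {x : V} (c : G.Walk x x) (hc : c.IsCycle) :
    ∃ a b : V, a ≠ b ∧ G.Adj x a ∧ G.Adj x b ∧ a ∈ c.support ∧ b ∈ c.support := by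
  obtain ⟨a, hxa, p, rfl⟩ := Walk.not_nil_iff.mp hc.not_nil
  have hplen : 2 ≤ p.length := by
    have := hc.three_le_length
    simp only [Walk.length_cons] at this
    omega
  have hpnodup : p.support.Nodup := by
    have := hc.support_nodup
    simpa using this
  have hpnn : ¬p.reverse.Nil := by
    rw [Walk.nil_iff_length_eq, Walk.length_reverse]
    omega
  obtain ⟨b, hxb, q, hq⟩ := Walk.not_nil_iff.mp hpnn
  have hbp : b ∈ p.support := by
    have : b ∈ p.reverse.support := by rw [hq]; simp
    rwa [Walk.support_reverse, List.mem_reverse] at this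
  refine ⟨a, b, ?_, hxa, hxb, by simp, by simp [hbp]⟩
  rintro rfl
  have hqnodup : q.support.Nodup := by
    have : p.reverse.support.Nodup := by
      rw [Walk.support_reverse]; exact List.nodup_reverse.mpr hpnodup
    rw [hq] at this
    simpa using (List.nodup_cons.mp (by simpa using this)).2
  have hqlen : 1 ≤ q.length := by
    have := congrArg Walk.length hq
    simp only [Walk.length_reverse, Walk.length_cons] at this
    omega
  have hqnn : ¬q.Nil := by rw [Walk.nil_iff_length_eq]; omega
  obtain ⟨d, hd, r, rfl⟩ := Walk.not_nil_iff.mp hqnn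
  simp only [Walk.support_cons, List.nodup_cons] at hqnodup
  exact hqnodup.1 r.end_mem_support

end helpers

/-- A graph is *geodetic* if it is connected and between any two vertices
there is exactly one shortest path (geodesic). -/
def IsGeodetic {V : Type*} (G : SimpleGraph V) : Prop :=
  G.Connected ∧ ∀ u v : V, ∃! p : G.Walk u v, p.IsPath ∧ p.length = G.dist u v

/-- A cycle `c` of `G` is *extendable* if there is a cycle of `G` whose vertex set consists
of all the vertices of `c` together with exactly one additional vertex. -/
def CycleExtendable {V : Type*} (G : SimpleGraph V) {v : V} (c : G.Walk v v) : Prop :=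
  ∃ (w : V) (c' : G.Walk w w), c'.IsCycle ∧
    ∃ x : V, x ∉ c.support ∧ {y : V | y ∈ c'.support} = insert x {y : V | y ∈ c.support}

/-- A finite geodetic fully cycle extendable graph (every vertex lies on a triangle and
every non-Hamiltonian cycle is extendable) is complete. -/
theorem stmt_8 {V : Type*} [Fintype V] (G : SimpleGraph V) (hG : IsGeodetic G)
    (htri : ∀ v : V, ∃ c : G.Walk v v, c.IsCycle ∧ c.length = 3)
    (hext : ∀ (v : V) (c : G.Walk v v), c.IsCycle → ¬(∀ w : V, w ∈ c.support) →
      CycleExtendable G c) :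
    G = ⊤ := by
  classical
  cases isEmpty_or_nonempty V with
  | inl h => ext a b; exact isEmptyElim a
  | inr h =>
  -- key step: a clique that is the support of a cycle extends
  have key : ∀ m : ℕ, ∀ S : Finset V,
      (∀ a ∈ S, ∀ b ∈ S, a ≠ b → G.Adj a b) →
      (∃ (w : V) (c : G.Walk w w), c.IsCycle ∧ {y : V | y ∈ c.support} = ↑S) →
      S.card + m = Fintype.card V → ∀ a b : V, a ≠ b → G.Adj a b := by
    intro m
    induction m with
    | zero =>
      intro S hclq hcyc hcard a b hab
      have : S = Finset.univ := S.card_eq_iff_eq_univ.mp (by omega)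
      exact hclq a (by simp [this]) b (by simp [this]) hab
    | succ m ih =>
      intro S hclq ⟨w, c, hc, hsupp⟩ hcard
      have hnotham : ¬(∀ w : V, w ∈ c.support) := by
        intro hall
        have : S = Finset.univ := by
          apply Finset.eq_univ_of_forall
          intro y
          have : y ∈ {z : V | z ∈ c.support} := hall y
          rw [hsupp] at this
          exact_mod_cast this
        rw [this, Finset.card_univ] at hcard
        omega
      obtain ⟨w', c', hc', x, hxc, hsupp'⟩ := hext w c hc hnotham
      have hxS : x ∉ S := by
        intro hmem
        apply hxc
        have : x ∈ {y : V | y ∈ c.support} := by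
          rw [hsupp]; exact Finset.mem_coe.mpr hmem
        exact this
      have hxc' : x ∈ c'.support := by
        have : x ∈ {y : V | y ∈ c'.support} := by rw [hsupp']; exact Set.mem_insert x _
        exact this
      -- rotate c' to be based at x
      set c'' := c'.rotate x hxc' with hc''def
      have hc''cyc : c''.IsCycle := hc'.rotate hxc'
      have hmemc'' : ∀ y : V, y ∈ c''.support ↔ y ∈ c'.support :=
        fun y => mem_support_rotate_iff hc' hxc'
      obtain ⟨a, b, hab, hxa, hxb, hac, hbc⟩ := cycle_two_neighbors c'' hc''cyc
      -- a and b belong to S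
      have hmemS : ∀ y : V, y ∈ c''.support → y ≠ x → y ∈ S := by
        intro y hy hyx
        have : y ∈ {z : V | z ∈ c'.support} := (hmemc'' y).mp hy
        rw [hsupp'] at this
        rcases this with h | h
        · exact absurd h hyx
        · exact Finset.mem_coe.mp (hsupp ▸ h)
      have haS : a ∈ S := hmemS a hac hxa.ne'
      have hbS : b ∈ S := hmemS b hbc hxb.ne'
      -- x is adjacent to every vertex of S
      have hxadj : ∀ z ∈ S, G.Adj x z := by
        intro z hzS
        by_cases hza : z = a
        · rwa [hza]
        by_cases hzb : z = b
        · rwa [hzb]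
        by_contra hnadj
        have hxz : x ≠ z := fun h => hxS (h ▸ hzS)
        have haz : G.Adj a z := hclq a haS z hzS (Ne.symm hza)
        have hbz : G.Adj b z := hclq b hbS z hzS (Ne.symm hzb)
        -- two distinct geodesics of length 2 from x to z
        have hdist : G.dist x z = 2 := by
          have h1 : G.dist x z ≤ 2 := by
            have := G.dist_le (Walk.cons hxa (Walk.cons haz Walk.nil))
            simpa using this
          have h0 : G.dist x z ≠ 0 := by
            intro h0'
            rw [SimpleGraph.dist_eq_zero_iff_eq_or_not_reachable] at h0'
            rcases h0' with h0' | h0'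
            · exact hxz h0'
            · exact h0' (hG.1.preconnected x z)
          have hne1 : G.dist x z ≠ 1 := fun h =>
            hnadj (SimpleGraph.dist_eq_one_iff_adj.mp h)
          omega
        set w1 : G.Walk x z := Walk.cons hxa (Walk.cons haz Walk.nil) with hw1
        set w2 : G.Walk x z := Walk.cons hxb (Walk.cons hbz Walk.nil) with hw2
        have hw1p : w1.IsPath ∧ w1.length = G.dist x z := by
          constructor
          · rw [Walk.isPath_def]
            simp [hw1, hxa.ne, hxz, Ne.symm hza]
          · simp [hw1, hdist]
        have hw2p : w2.IsPath ∧ w2.length = G.dist x z := by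
          constructor
          · rw [Walk.isPath_def]
            simp [hw2, hxb.ne, hxz, Ne.symm hzb]
          · simp [hw2, hdist]
        obtain ⟨p, _, hpuniq⟩ := hG.2 x z
        have : w1 = w2 := (hpuniq w1 hw1p).trans (hpuniq w2 hw2p).symm
        have : w1.support = w2.support := by rw [this]
        simp only [hw1, hw2, Walk.support_cons, Walk.support_nil] at this
        exact hab (by injection this with _ h; injection h)
      -- the new clique
      refine ih (insert x S) ?_ ⟨w', c', hc', ?_⟩ ?_
      · intro p hp q hq hpq
        rcases Finset.mem_insert.mp hp with hp' | hp' <;>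
          rcases Finset.mem_insert.mp hq with hq' | hq'
        · exact absurd (hp'.trans hq'.symm) hpq
        · exact hp' ▸ hxadj q hq'
        · exact hq' ▸ (hxadj p hp').symm
        · exact hclq p hp' q hq' hpq
      · rw [hsupp', hsupp, Finset.coe_insert]
      · rw [Finset.card_insert_of_notMem hxS]
        omega
  -- build the starting triangle
  obtain ⟨c, hc, hlen⟩ := htri (Classical.arbitrary V)
  set v := Classical.arbitrary V with hv
  obtain ⟨a, hva, p, rfl⟩ := Walk.not_nil_iff.mp hc.not_nil
  have hplen : p.length = 2 := by
    simp only [Walk.length_cons] at hlen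
    omega
  have hpnn : ¬p.Nil := by rw [Walk.nil_iff_length_eq]; omega
  obtain ⟨b, hab, q, rfl⟩ := Walk.not_nil_iff.mp hpnn
  have hqlen : q.length = 1 := by
    simp only [Walk.length_cons] at hplen
    omega
  have hbv : G.Adj b v := by
    cases q with
    | nil => simp at hqlen
    | cons h q' =>
      cases q' with
      | nil => exact h
      | cons h' q'' => simp [Walk.length_cons] at hqlen
  have hq : q = Walk.cons hbv Walk.nil := by
    cases q with
    | nil => simp at hqlen
    | cons h q' =>
      cases q' with
      | nil => rfl
      | cons h' q'' => simp [Walk.length_cons] at hqlen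
  subst hq
  have hnodup := hc.support_nodup
  simp only [Walk.support_cons, Walk.support_nil, List.tail_cons, List.nodup_cons,
    List.mem_cons, List.mem_singleton, List.not_mem_nil] at hnodup
  have hav : a ≠ v := fun h => hnodup.1 (Or.inr (Or.inl h))
  have hab' : a ≠ b := fun h => hnodup.1 (Or.inl h)
  have hbv' : b ≠ v := fun h => hnodup.2.1 (Or.inl h)
  set S : Finset V := {v, a, b} with hS
  have hScard : S.card = 3 := by
    rw [hS]
    rw [Finset.card_insert_of_notMem (by simp [hva.ne, hbv.ne', hav.symm]),
      Finset.card_insert_of_notMem (by simp [hab'])]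
    simp
  have hSle : S.card ≤ Fintype.card V := S.card_le_univ
  have := key (Fintype.card V - 3) S ?_ ?_ (by omega)
  · ext p q
    simp only [top_adj]
    constructor
    · exact fun h => h.ne
    · exact fun h => this p q h
  · intro p hp q hq hpq
    simp only [hS, Finset.mem_insert, Finset.mem_singleton] at hp hq
    rcases hp with rfl | rfl | rfl <;> rcases hq with rfl | rfl | rfl <;>
      first
        | exact absurd rfl hpq
        | exact hva
        | exact hva.symm
        | exact hab
        | exact hab.symm
        | exact hbv
        | exact hbv.symm
  · refine ⟨v, _, hc, ?_⟩
    ext y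
    simp only [Walk.support_cons, Walk.support_nil, List.mem_cons, List.not_mem_nil,
      Set.mem_setOf_eq, hS, Finset.coe_insert, Finset.coe_singleton, Set.mem_insert_iff,
      Set.mem_singleton_iff, List.mem_singleton]
    tauto
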